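/- arXiv:1903.08244 — 4 statements merged into one kernel-verified Lean document; each statement's English description precedes it below -/
import Mathlib

section
/- One has 𝒴*(0) = 3π/8, i.e. the improper integral ∫₀^∞ db / (1 + 3Ψ₁(−p*·b²)²) converges and equals 3π/8. -/
noncomputable section

open Real MeasureTheory

/-- The real cube root. -/
def cbrt (x : ℝ) : ℝ := Real.sign x * |x| ^ ((1 : ℝ) / 3)

lemma cbrt_cube (x : ℝ) : (cbrt x) ^ 3 = x := by
  have h1 : (|x| ^ ((1:ℝ)/3)) ^ (3:ℕ) = |x| := by
    rw [← Real.rpow_natCast (|x| ^ ((1:ℝ)/3)) 3, ← Real.rpow_mul (abs_nonneg x)]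
    norm_num
  have h2 : (Real.sign x) ^ 3 = Real.sign x := by
    rcases lt_trichotomy x 0 with h | h | h
    · rw [Real.sign_of_neg h]; norm_num
    · rw [h, Real.sign_zero]; norm_num
    · rw [Real.sign_of_pos h]; norm_num
  calc (cbrt x) ^ 3 = (Real.sign x) ^ 3 * (|x| ^ ((1:ℝ)/3)) ^ (3:ℕ) := by
        rw [cbrt]; ring
    _ = Real.sign x * |x| := by rw [h1, h2]
    _ = x := by
        rcases lt_trichotomy x 0 with h | h | h
        · rw [Real.sign_of_neg h, abs_of_neg h]; ring
        · simp [h]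
        · rw [Real.sign_of_pos h, abs_of_pos h]; ring

lemma cube_add_injective : Function.Injective fun t : ℝ => t ^ 3 + t := by
  have : StrictMono fun t : ℝ => t ^ 3 + t :=
    (Odd.strictMono_pow (⟨1, by norm_num⟩)).add strictMono_id
  exact this.injective

lemma cube_injective : Function.Injective fun t : ℝ => t ^ 3 :=
  (Odd.strictMono_pow (R := ℝ) (⟨1, by norm_num⟩)).injective

/-- The profile `Ψ₁`, inverse of `X ↦ -X - X³`. -/
def Psi1 (X : ℝ) : ℝ :=
  cbrt (-X / 2 + Real.sqrt (1 / 27 + X ^ 2 / 4)) +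
    cbrt (-X / 2 - Real.sqrt (1 / 27 + X ^ 2 / 4))

lemma Psi1_inv (t : ℝ) : Psi1 (-(t ^ 3 + t)) = t := by
  set X : ℝ := -(t ^ 3 + t) with hX
  have hd : (0:ℝ) ≤ 1 / 27 + X ^ 2 / 4 := by positivity
  set A : ℝ := -X / 2 + Real.sqrt (1 / 27 + X ^ 2 / 4) with hA
  set B : ℝ := -X / 2 - Real.sqrt (1 / 27 + X ^ 2 / 4) with hB
  have hsq : Real.sqrt (1 / 27 + X ^ 2 / 4) ^ 2 = 1 / 27 + X ^ 2 / 4 := Real.sq_sqrt hd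
  have hABm : A * B = -1 / 27 := by rw [hA, hB]; nlinarith [hsq]
  have ha : cbrt A ^ 3 = A := cbrt_cube A
  have hb : cbrt B ^ 3 = B := cbrt_cube B
  have hab : cbrt A * cbrt B = -1/3 := by
    have h3 : (cbrt A * cbrt B) ^ 3 = (-1/3 : ℝ) ^ 3 := by
      rw [mul_pow, ha, hb, hABm]; norm_num
    exact cube_injective h3
  have hsum : cbrt A ^ 3 + cbrt B ^ 3 = t ^ 3 + t := by
    rw [ha, hb, hA, hB, hX]; ring
  have key : (cbrt A + cbrt B) ^ 3 + (cbrt A + cbrt B) = t ^ 3 + t := by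
    have expand : (cbrt A + cbrt B) ^ 3 =
        cbrt A ^ 3 + cbrt B ^ 3 + 3 * (cbrt A * cbrt B) * (cbrt A + cbrt B) := by ring
    rw [expand, hsum, hab]; ring
  have := cube_add_injective key
  rw [Psi1, ← hA, ← hB]; exact this

/-- The normalising constant `p* = (4/(9π³))·Γ(1/4)⁴`. -/
def pStar : ℝ := (4 / (9 * π ^ 3)) * Real.Gamma (1 / 4) ^ 4

/-- The displacement curve `𝒴*(X) = ∫₀^∞ db / (1 + 3Ψ₁(p*(X - b²))²)`. -/
def Ystar (X : ℝ) : ℝ :=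
  ∫ b in Set.Ioi (0 : ℝ), 1 / (1 + 3 * (Psi1 (pStar * (X - b ^ 2))) ^ 2)

lemma Gamma_quarter_pos : 0 < Real.Gamma (1/4) :=
  Real.Gamma_pos_of_pos (by norm_num)

lemma pStar_pos : 0 < pStar := by
  have h := Gamma_quarter_pos
  have hπ := Real.pi_pos
  unfold pStar
  positivity

/-! ### Beta integral -/

lemma quarter_re : (0:ℝ) < Complex.re (1/4 : ℂ) := by norm_num

lemma beta_eq_ofReal :
    ∀ x ∈ Set.Ioo (0:ℝ) 1,
      ((x:ℂ) ^ ((1/4:ℂ) - 1) * (1 - (x:ℂ)) ^ ((1/4:ℂ) - 1)) =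
        ((x ^ (-(3/4):ℝ) * (1-x) ^ (-(3/4):ℝ) : ℝ) : ℂ) := by
  intro x hx
  have hx0 : (0:ℝ) ≤ x := hx.1.le
  have hx1 : (0:ℝ) ≤ 1 - x := by linarith [hx.2]
  rw [Complex.ofReal_mul, Complex.ofReal_cpow hx0, Complex.ofReal_cpow hx1]
  push_cast
  norm_num

lemma beta_integrable :
    IntegrableOn (fun x : ℝ => x ^ (-(3/4):ℝ) * (1-x) ^ (-(3/4):ℝ)) (Set.Ioo 0 1) := by
  have hc := Complex.betaIntegral_convergent (u := 1/4) (v := 1/4) quarter_re quarter_re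
  have h2 : IntegrableOn (fun x : ℝ =>
      (x:ℂ) ^ ((1/4:ℂ) - 1) * (1 - (x:ℂ)) ^ ((1/4:ℂ) - 1)) (Set.Ioo 0 1) :=
    ((intervalIntegrable_iff_integrableOn_Ioc_of_le zero_le_one).mp hc).mono_set
      Set.Ioo_subset_Ioc_self
  have h3 : IntegrableOn (fun x : ℝ =>
      ‖(x:ℂ) ^ ((1/4:ℂ) - 1) * (1 - (x:ℂ)) ^ ((1/4:ℂ) - 1)‖) (Set.Ioo 0 1) := h2.norm
  refine h3.congr_fun (fun x hx => ?_) measurableSet_Ioo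
  have hx0 : (0:ℝ) < x := hx.1
  have hx1 : (0:ℝ) < 1 - x := by linarith [hx.2]
  beta_reduce
  rw [beta_eq_ofReal x hx]
  have h : (0:ℝ) ≤ x ^ (-(3/4):ℝ) * (1-x) ^ (-(3/4):ℝ) := by positivity
  rw [Complex.norm_real, Real.norm_eq_abs, abs_of_nonneg h]

lemma beta_value :
    ∫ x in Set.Ioo (0:ℝ) 1, x ^ (-(3/4):ℝ) * (1-x) ^ (-(3/4):ℝ) =
      Real.Gamma (1/4) ^ 2 / Real.sqrt π := by
  have hβ := Complex.Gamma_mul_Gamma_eq_betaIntegral quarter_re quarter_re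
  have hhalf : (1/4 : ℂ) + 1/4 = 1/2 := by norm_num
  have hπeq : ((π:ℝ):ℂ) ^ (1/2 : ℂ) = ((Real.sqrt π : ℝ) : ℂ) := by
    rw [Real.sqrt_eq_rpow, Complex.ofReal_cpow Real.pi_pos.le]
    norm_num
  rw [hhalf, Complex.Gamma_one_half_eq, hπeq] at hβ
  have hπ : ((Real.sqrt π : ℝ) : ℂ) ≠ 0 := by
    simp [Real.sqrt_ne_zero', Real.pi_pos]
  have hG : Complex.Gamma (1/4) = ((Real.Gamma (1/4) : ℝ) : ℂ) := by
    rw [show (1/4 : ℂ) = ((1/4 : ℝ) : ℂ) by norm_num, Complex.Gamma_ofReal]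
  have hbeta_val : Complex.betaIntegral (1/4) (1/4) =
      ((Real.Gamma (1/4) ^ 2 / Real.sqrt π : ℝ) : ℂ) := by
    rw [hG] at hβ
    rw [eq_comm, Complex.ofReal_div, Complex.ofReal_pow, div_eq_iff hπ, sq, hβ]
    ring
  have hIoo : Complex.betaIntegral (1/4) (1/4) =
      ∫ x in Set.Ioo (0:ℝ) 1,
        ((x ^ (-(3/4):ℝ) * (1-x) ^ (-(3/4):ℝ) : ℝ) : ℂ) := by
    rw [Complex.betaIntegral, intervalIntegral.integral_of_le zero_le_one,
      MeasureTheory.integral_Ioc_eq_integral_Ioo]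
    exact setIntegral_congr_fun measurableSet_Ioo beta_eq_ofReal
  have hcast : ∫ x in Set.Ioo (0:ℝ) 1, ((x ^ (-(3/4):ℝ) * (1-x) ^ (-(3/4):ℝ) : ℝ) : ℂ) =
      ((∫ x in Set.Ioo (0:ℝ) 1, x ^ (-(3/4):ℝ) * (1-x) ^ (-(3/4):ℝ) : ℝ) : ℂ) :=
    integral_ofReal (𝕜 := ℂ)
  rw [hcast, hbeta_val] at hIoo
  exact_mod_cast hIoo.symm

/-! ### First substitution `ψ ↦ √((ψ³+ψ)/p*)` -/

def sub1 (ψ : ℝ) : ℝ := Real.sqrt ((ψ^3 + ψ)/pStar)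

def sub1d (ψ : ℝ) : ℝ := 1 / (2 * Real.sqrt ((ψ^3+ψ)/pStar)) * ((3*ψ^2+1)/pStar)

lemma sub1_hasDeriv {ψ : ℝ} (hψ : ψ ∈ Set.Ioi (0:ℝ)) :
    HasDerivWithinAt sub1 (sub1d ψ) (Set.Ioi 0) ψ := by
  have hψ0 : 0 < ψ := hψ
  have hp := pStar_pos
  have h1 : 0 < ψ^3 + ψ := by positivity
  have hne : (ψ^3+ψ)/pStar ≠ 0 := by positivity
  have hu : HasDerivAt (fun t : ℝ => (t^3+t)/pStar) ((3*ψ^2+1)/pStar) ψ := by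
    have h := ((hasDerivAt_pow 3 ψ).add (hasDerivAt_id ψ)).div_const pStar
    exact h.congr_deriv (by norm_num)
  have := (Real.hasDerivAt_sqrt hne).comp ψ hu
  exact this.hasDerivWithinAt

lemma sub1_injOn : Set.InjOn sub1 (Set.Ioi 0) := by
  intro a ha b hb h
  have ha0 : (0:ℝ) < a := ha
  have hb0 : (0:ℝ) < b := hb
  have hp := pStar_pos
  have h1 : (a^3+a)/pStar = (b^3+b)/pStar :=
    (Real.sqrt_inj (by positivity) (by positivity)).mp h
  have h2 : a^3+a = b^3+b := by
    field_simp [pStar_pos.ne'] at h1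
    linear_combination h1
  exact cube_add_injective h2

lemma sub1_image : sub1 '' Set.Ioi 0 = Set.Ioi 0 := by
  ext y
  constructor
  · rintro ⟨ψ, hψ, rfl⟩
    have hψ0 : (0:ℝ) < ψ := hψ
    exact Real.sqrt_pos.mpr (div_pos (by positivity) pStar_pos)
  · intro hy
    have hy0 : (0:ℝ) < y := hy
    have hp := pStar_pos
    set c : ℝ := pStar * y^2 with hc
    have hc0 : 0 < c := by positivity
    have hcont : ContinuousOn (fun t : ℝ => t^3+t) (Set.Icc 0 c) :=
      (continuous_pow 3 |>.add continuous_id).continuousOn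
    have hmem : c ∈ Set.Icc ((fun t:ℝ => t^3+t) 0) ((fun t:ℝ=>t^3+t) c) := by
      simp only
      constructor
      · norm_num
        exact hc0.le
      · nlinarith [pow_pos hc0 3]
    obtain ⟨t, ht, hft⟩ := intermediate_value_Icc hc0.le hcont hmem
    simp only at hft
    have ht0 : 0 < t := by
      rcases ht.1.lt_or_eq with h | h
      · exact h
      · exfalso; rw [← h] at hft; simp at hft; nlinarith
    refine ⟨t, ht0, ?_⟩
    have harg : (t^3+t)/pStar = y^2 := by rw [hft, hc]; field_simp
    rw [sub1, harg, Real.sqrt_sq hy0.le]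

lemma pointC {ψ : ℝ} (hψ : ψ ∈ Set.Ioi (0:ℝ)) :
    |sub1d ψ| * (1 / (1 + 3 * (Psi1 (pStar * (0 - sub1 ψ ^ 2))) ^ 2)) =
      1/(2 * Real.sqrt pStar * Real.sqrt (ψ^3+ψ)) := by
  have hψ0 : (0:ℝ) < ψ := hψ
  have h1 : 0 < ψ^3+ψ := by positivity
  have hp := pStar_pos
  have hs2 : sub1 ψ ^ 2 = (ψ^3+ψ)/pStar := Real.sq_sqrt (by positivity)
  have harg : pStar * (0 - sub1 ψ^2) = -(ψ^3+ψ) := by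
    rw [hs2]; field_simp; ring
  rw [harg, Psi1_inv ψ, sub1d]
  have hsqp : Real.sqrt ((ψ^3+ψ)/pStar) = Real.sqrt (ψ^3+ψ)/Real.sqrt pStar :=
    Real.sqrt_div h1.le _
  have hsp : 0 < Real.sqrt pStar := Real.sqrt_pos.mpr hp
  have hsψ : 0 < Real.sqrt (ψ^3+ψ) := Real.sqrt_pos.mpr h1
  have habs : (0:ℝ) ≤ 1 / (2 * Real.sqrt ((ψ^3+ψ)/pStar)) * ((3*ψ^2+1)/pStar) := by
    positivity
  rw [abs_of_nonneg habs, hsqp]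
  set sp := Real.sqrt pStar with hspdef
  set sψ := Real.sqrt (ψ^3+ψ) with hsψdef
  have hp2 : pStar = Real.sqrt pStar ^ 2 := (Real.sq_sqrt hp.le).symm
  have h3 : (0:ℝ) < 1 + 3*ψ^2 := by positivity
  field_simp
  linear_combination (-(3*ψ^2+1)) * hp2 -
    (-(3*ψ^2+1)) * (sp + Real.sqrt pStar) * hspdef

/-! ### Second substitution `x ↦ √(x/(1-x))` -/

def sub2 (x : ℝ) : ℝ := Real.sqrt (x/(1-x))

def sub2d (x : ℝ) : ℝ := 1 / (2 * Real.sqrt (x/(1-x))) * (1/(1-x)^2)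

lemma sub2_hasDeriv {x : ℝ} (hx : x ∈ Set.Ioo (0:ℝ) 1) :
    HasDerivWithinAt sub2 (sub2d x) (Set.Ioo 0 1) x := by
  have hx0 : 0 < x := hx.1
  have h1x : 0 < 1 - x := by linarith [hx.2]
  have hne : x/(1-x) ≠ 0 := by positivity
  have hu : HasDerivAt (fun t : ℝ => t/(1-t)) (1/(1-x)^2) x := by
    have h := (hasDerivAt_id x).div ((hasDerivAt_const x (1:ℝ)).sub (hasDerivAt_id x)) h1x.ne'
    have heq : (1*(1-x) - x*(0-1))/(1-x)^2 = 1/(1-x)^2 := by ring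
    exact h.congr_deriv (by simp only [Pi.sub_apply, id_eq]; ring)
  have := (Real.hasDerivAt_sqrt hne).comp x hu
  exact this.hasDerivWithinAt

lemma sub2_injOn : Set.InjOn sub2 (Set.Ioo 0 1) := by
  intro a ha b hb h
  have ha0 : 0 < a := ha.1
  have h1a : 0 < 1 - a := by linarith [ha.2]
  have hb0 : 0 < b := hb.1
  have h1b : 0 < 1 - b := by linarith [hb.2]
  have h1 : a/(1-a) = b/(1-b) :=
    (Real.sqrt_inj (by positivity) (by positivity)).mp h
  rw [div_eq_div_iff h1a.ne' h1b.ne'] at h1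
  nlinarith [h1]

lemma sub2_image : sub2 '' Set.Ioo 0 1 = Set.Ioi 0 := by
  ext y
  constructor
  · rintro ⟨x, hx, rfl⟩
    have hx0 : 0 < x := hx.1
    have h1x : 0 < 1 - x := by linarith [hx.2]
    exact Real.sqrt_pos.mpr (by positivity)
  · intro hy
    have hy0 : (0:ℝ) < y := hy
    refine ⟨y^2/(1+y^2), ⟨by positivity, ?_⟩, ?_⟩
    · rw [div_lt_one (by positivity)]; linarith
    · have hd : 1 - y^2/(1+y^2) = 1/(1+y^2) := by
        field_simp
        ring
      have harg : (y^2/(1+y^2))/(1-(y^2/(1+y^2))) = y^2 := by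
        rw [hd]
        field_simp
      rw [sub2, harg, Real.sqrt_sq hy0.le]

lemma pointB {x : ℝ} (hx : x ∈ Set.Ioo (0:ℝ) 1) :
    |sub2d x| * (1/(2 * Real.sqrt pStar * Real.sqrt (sub2 x ^3 + sub2 x))) =
      (4 * Real.sqrt pStar)⁻¹ * (x ^ (-(3/4):ℝ) * (1-x) ^ (-(3/4):ℝ)) := by
  have hx0 : 0 < x := hx.1
  have h1x : 0 < 1 - x := by linarith [hx.2]
  have hp := pStar_pos
  have hsp : 0 < Real.sqrt pStar := Real.sqrt_pos.mpr hp
  have hA : sub2 x = x ^ ((1:ℝ)/2) * ((1-x) ^ ((1:ℝ)/2))⁻¹ := by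
    rw [sub2, Real.sqrt_eq_rpow, Real.div_rpow hx0.le h1x.le, div_eq_mul_inv]
  have hsq : sub2 x ^ 2 = x/(1-x) := Real.sq_sqrt (by positivity)
  have hkey : sub2 x ^ 3 + sub2 x = x ^ ((1:ℝ)/2) * (1-x) ^ (-(3/2):ℝ) := by
    have e1 : sub2 x ^ 3 + sub2 x = sub2 x * (sub2 x ^ 2 + 1) := by ring
    rw [e1, hsq, hA]
    have e2 : x/(1-x) + 1 = (1-x)⁻¹ := by field_simp; ring
    rw [e2]
    rw [show ((1-x):ℝ)⁻¹ = (1-x) ^ (-1:ℝ) from (Real.rpow_neg_one _).symm,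
      show (((1-x) ^ ((1:ℝ)/2) : ℝ))⁻¹ = (1-x) ^ (-(1/2):ℝ) by
        rw [← Real.rpow_neg h1x.le],
      mul_assoc, ← Real.rpow_add h1x]
    norm_num
  have hB : Real.sqrt (sub2 x ^3 + sub2 x) = x ^ ((1:ℝ)/4) * ((1-x) ^ ((3:ℝ)/4))⁻¹ := by
    rw [hkey, Real.sqrt_eq_rpow,
      Real.mul_rpow (by positivity) (by positivity),
      ← Real.rpow_mul hx0.le, ← Real.rpow_mul h1x.le,
      show (1:ℝ)/2 * (1/2) = 1/4 by norm_num,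
      show (-(3/2):ℝ) * (1/2) = -(3/4) by norm_num,
      Real.rpow_neg h1x.le]
  have habs : (0:ℝ) ≤ sub2d x := by
    rw [sub2d]; positivity
  rw [abs_of_nonneg habs, sub2d, hB,
    show Real.sqrt (x/(1-x)) = sub2 x from rfl, hA]
  rw [show (x:ℝ) ^ (-(3/4):ℝ) = (x ^ ((3:ℝ)/4))⁻¹ by
      rw [← Real.rpow_neg hx0.le],
    show ((1-x):ℝ) ^ (-(3/4):ℝ) = ((1-x) ^ ((3:ℝ)/4))⁻¹ by
      rw [← Real.rpow_neg h1x.le]]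
  have e1 : x ^ ((1:ℝ)/2) * x ^ ((1:ℝ)/4) = x ^ ((3:ℝ)/4) := by
    rw [← Real.rpow_add hx0]; norm_num
  have e2 : (1-x) ^ ((1:ℝ)/2) * ((1-x) ^ ((3:ℝ)/4) * (1-x) ^ ((3:ℝ)/4)) = (1-x)^2 := by
    rw [← Real.rpow_add h1x, ← Real.rpow_add h1x, ← Real.rpow_natCast (1-x) 2]
    norm_num
  rw [← e1, ← e2]
  have p1 : (0:ℝ) < x ^ ((1:ℝ)/2) := by positivity
  have p2 : (0:ℝ) < x ^ ((1:ℝ)/4) := by positivity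
  have p3 : (0:ℝ) < (1-x) ^ ((1:ℝ)/2) := by positivity
  have p4 : (0:ℝ) < (1-x) ^ ((3:ℝ)/4) := by positivity
  field_simp
  ring


/-- `𝒴*(0) = 3π/8`: the integral `∫₀^∞ db / (1 + 3Ψ₁(-p*·b²)²)` converges and
equals `3π/8`. -/
theorem Ystar_zero :
    IntegrableOn (fun b : ℝ => 1 / (1 + 3 * (Psi1 (pStar * (0 - b ^ 2))) ^ 2))
      (Set.Ioi (0 : ℝ)) ∧
    Ystar 0 = 3 * π / 8 := by
  have hp := pStar_pos
  have hsp : 0 < Real.sqrt pStar := Real.sqrt_pos.mpr hp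
  have hΓ := Gamma_quarter_pos
  have hsπ : 0 < Real.sqrt π := Real.sqrt_pos.mpr Real.pi_pos
  set F : ℝ → ℝ := fun b : ℝ => 1 / (1 + 3 * (Psi1 (pStar * (0 - b ^ 2))) ^ 2) with hF
  set G : ℝ → ℝ := fun ψ : ℝ => 1/(2 * Real.sqrt pStar * Real.sqrt (ψ^3+ψ)) with hG
  set K : ℝ → ℝ := fun x : ℝ =>
    (4 * Real.sqrt pStar)⁻¹ * (x ^ (-(3/4):ℝ) * (1-x) ^ (-(3/4):ℝ)) with hK
  -- step B : G on (0,∞) ↔ K on (0,1)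
  have hKint : IntegrableOn K (Set.Ioo 0 1) := beta_integrable.const_mul _
  have hEqB : Set.EqOn (fun x => |sub2d x| • G (sub2 x)) K (Set.Ioo 0 1) := by
    intro x hx
    simpa [hG, hK, smul_eq_mul] using pointB hx
  have hGint : IntegrableOn G (Set.Ioi 0) := by
    rw [← sub2_image]
    rw [integrableOn_image_iff_integrableOn_abs_deriv_smul measurableSet_Ioo
      (fun x hx => sub2_hasDeriv hx) sub2_injOn G]
    exact (integrableOn_congr_fun hEqB measurableSet_Ioo).mpr hKint
  have hGval : ∫ ψ in Set.Ioi (0:ℝ), G ψ =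
      (4 * Real.sqrt pStar)⁻¹ * (Real.Gamma (1/4)^2 / Real.sqrt π) := by
    rw [← sub2_image, integral_image_eq_integral_abs_deriv_smul measurableSet_Ioo
      (fun x hx => sub2_hasDeriv hx) sub2_injOn G,
      setIntegral_congr_fun measurableSet_Ioo hEqB, hK]
    simp only
    rw [MeasureTheory.integral_const_mul, beta_value]
  -- step C : F on (0,∞) ↔ G on (0,∞)
  have hEqC : Set.EqOn (fun ψ => |sub1d ψ| • F (sub1 ψ)) G (Set.Ioi 0) := by
    intro ψ hψ
    simpa [hF, hG, smul_eq_mul] using pointC hψ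
  have hFint : IntegrableOn F (Set.Ioi 0) := by
    rw [← sub1_image]
    rw [integrableOn_image_iff_integrableOn_abs_deriv_smul measurableSet_Ioi
      (fun ψ hψ => sub1_hasDeriv hψ) sub1_injOn F]
    exact (integrableOn_congr_fun hEqC measurableSet_Ioi).mpr hGint
  have hFval : ∫ b in Set.Ioi (0:ℝ), F b =
      (4 * Real.sqrt pStar)⁻¹ * (Real.Gamma (1/4)^2 / Real.sqrt π) := by
    rw [← sub1_image, integral_image_eq_integral_abs_deriv_smul measurableSet_Ioi
      (fun ψ hψ => sub1_hasDeriv hψ) sub1_injOn F,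
      setIntegral_congr_fun measurableSet_Ioi hEqC, hGval]
  -- numerics
  have hspeq : Real.sqrt pStar = 2 * Real.Gamma (1/4)^2 / (3 * π * Real.sqrt π) := by
    have h9 : (3 * π * Real.sqrt π)^2 = 9 * π^3 := by
      rw [mul_pow, mul_pow, Real.sq_sqrt Real.pi_pos.le]; ring
    have hps2 : pStar = (2 * Real.Gamma (1/4)^2 / (3 * π * Real.sqrt π))^2 := by
      rw [div_pow, h9, mul_pow]
      unfold pStar
      ring
    rw [hps2, Real.sqrt_sq (by positivity)]
  have hfinal : (4 * Real.sqrt pStar)⁻¹ * (Real.Gamma (1/4)^2 / Real.sqrt π) = 3 * π / 8 := by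
    rw [hspeq]
    field_simp
    ring
  refine ⟨hFint, ?_⟩
  rw [Ystar]
  rw [show (∫ b in Set.Ioi (0:ℝ), 1 / (1 + 3 * (Psi1 (pStar * ((0:ℝ) - b ^ 2))) ^ 2)) =
      ∫ b in Set.Ioi (0:ℝ), F b from rfl, hFval, hfinal]
end
end

section
/- For all (a,b) ∈ ℝ² one has Φ₁(a,−b) = Φ₁(a,b) and Φ₂(a,b) + Φ₂(a,−b) = 2·𝒴*(Φ₁(a,b)); moreover 0 < Φ₂(a,b) < 2·𝒴*(Φ₁(a,b)) for every (a,b) ∈ ℝ². -/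
noncomputable section

open Real MeasureTheory

/-- The map `Φ(a,b) = (a + b² + p*²a³, ∫_{-∞}^b db̃/(1 + 3Ψ₁(p*(a + p*²a³ + b² - b̃²))²))`. -/
def Phi (p : ℝ × ℝ) : ℝ × ℝ :=
  (p.1 + p.2 ^ 2 + pStar ^ 2 * p.1 ^ 3,
    ∫ t in Set.Iio p.2,
      1 / (1 + 3 * (Psi1 (pStar * (p.1 + pStar ^ 2 * p.1 ^ 3 + p.2 ^ 2 - t ^ 2))) ^ 2))


namespace PhiSym
open Set

lemma cbrt_cube (x : ℝ) : cbrt x ^ 3 = x := by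
  unfold cbrt
  rw [mul_pow]
  have h1 : (|x| ^ ((1:ℝ)/3)) ^ (3:ℕ) = |x| := by
    rw [← Real.rpow_natCast (|x| ^ ((1:ℝ)/3)) 3, ← Real.rpow_mul (abs_nonneg x)]
    norm_num
  rw [h1]
  rcases lt_trichotomy x 0 with h | h | h
  · rw [Real.sign_of_neg h, abs_of_neg h]; ring
  · simp [h]
  · rw [Real.sign_of_pos h, abs_of_pos h]; ring

lemma cube_inj {x y : ℝ} (h : x ^ 3 = y ^ 3) : x = y :=
  (Odd.strictMono_pow (R := ℝ) ⟨1, by norm_num⟩).injective h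

lemma Psi1_cubic (Y : ℝ) : Psi1 Y ^ 3 + Psi1 Y = -Y := by
  unfold Psi1
  set s := Real.sqrt (1/27 + Y^2/4) with hs
  have hsnn : (0:ℝ) ≤ 1/27 + Y^2/4 := by positivity
  have hs2 : s ^ 2 = 1/27 + Y^2/4 := Real.sq_sqrt hsnn
  set A := cbrt (-Y/2 + s) with hA'
  set B := cbrt (-Y/2 - s) with hB'
  have hA : A ^ 3 = -Y/2 + s := cbrt_cube _
  have hB : B ^ 3 = -Y/2 - s := cbrt_cube _
  have hAB : A * B = -(1/3) := by
    have h2 : (A*B)^3 = (-(1/3):ℝ)^3 := by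
      rw [mul_pow, hA, hB]; nlinarith [hs2]
    exact cube_inj h2
  have expand : (A+B)^3 = A^3 + B^3 + 3*(A*B)*(A+B) := by ring
  rw [expand, hA, hB, hAB]; ring

lemma pStar_pos : 0 < pStar := by
  unfold pStar
  have h1 : 0 < Real.Gamma (1/4) := Real.Gamma_pos_of_pos (by norm_num)
  have h2 : 0 < π := Real.pi_pos
  positivity

lemma measurable_cbrt : Measurable cbrt := by
  have hsign : Measurable Real.sign := by
    have : Real.sign = fun r : ℝ => if r < 0 then (-1:ℝ) else if 0 < r then 1 else 0 := rfl
    rw [this]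
    exact Measurable.ite (measurableSet_lt measurable_id measurable_const) measurable_const
      (Measurable.ite (measurableSet_lt measurable_const measurable_id)
        measurable_const measurable_const)
  have habs : Continuous fun x : ℝ => |x| ^ ((1:ℝ)/3) :=
    continuous_abs.rpow_const (fun x => Or.inr (by norm_num))
  exact hsign.mul habs.measurable

lemma measurable_Psi1 : Measurable Psi1 := by
  unfold Psi1
  have h1 : Continuous fun X : ℝ => -X / 2 + Real.sqrt (1 / 27 + X ^ 2 / 4) := by
    continuity
  have h2 : Continuous fun X : ℝ => -X / 2 - Real.sqrt (1 / 27 + X ^ 2 / 4) := by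
    continuity
  exact (measurable_cbrt.comp h1.measurable).add (measurable_cbrt.comp h2.measurable)

/-- The integrand. -/
def F (X t : ℝ) : ℝ := 1 / (1 + 3 * (Psi1 (pStar * (X - t ^ 2))) ^ 2)

lemma den_pos (X t : ℝ) : 0 < 1 + 3 * (Psi1 (pStar * (X - t ^ 2))) ^ 2 := by positivity

lemma F_pos (X t : ℝ) : 0 < F X t := by
  unfold F; exact div_pos one_pos (den_pos X t)

lemma F_le_one (X t : ℝ) : F X t ≤ 1 := by
  unfold F
  rw [div_le_one (den_pos X t)]
  nlinarith [sq_nonneg (Psi1 (pStar * (X - t ^ 2)))]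

lemma F_even (X t : ℝ) : F X (-t) = F X t := by unfold F; ring_nf

lemma measurable_F (X : ℝ) : Measurable (F X) := by
  unfold F
  have h : Measurable fun t : ℝ => pStar * (X - t ^ 2) := by fun_prop
  have := measurable_Psi1.comp h
  fun_prop

lemma Psi1_sq_ge {Y : ℝ} (h : 2 ≤ |Y|) : (|Y|/2) ^ ((2:ℝ)/3) ≤ Psi1 Y ^ 2 := by
  set Ψ := Psi1 Y with hΨ
  have hcubic : Ψ ^ 3 + Ψ = -Y := Psi1_cubic Y
  have habs : |Y| ≤ |Ψ|^3 + |Ψ| := by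
    calc |Y| = |Ψ ^ 3 + Ψ| := by rw [← abs_neg, ← hcubic]
    _ ≤ |Ψ^3| + |Ψ| := abs_add_le _ _
    _ = |Ψ|^3 + |Ψ| := by rw [abs_pow]
  have hone : 1 ≤ |Ψ| := by
    by_contra hc
    push_neg at hc
    have h3 : |Ψ|^3 ≤ |Ψ| := by
      nlinarith [mul_nonneg (mul_nonneg (abs_nonneg Ψ) (sub_nonneg.mpr hc.le))
        (by positivity : (0:ℝ) ≤ 1 + |Ψ|)]
    linarith
  have hcube : |Y|/2 ≤ |Ψ|^3 := by
    have h4 : |Ψ| ≤ |Ψ|^3 := by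
      nlinarith [mul_nonneg (mul_nonneg (abs_nonneg Ψ) (sub_nonneg.mpr hone))
        (by positivity : (0:ℝ) ≤ 1 + |Ψ|)]
    linarith
  calc (|Y|/2) ^ ((2:ℝ)/3) ≤ (|Ψ|^3) ^ ((2:ℝ)/3) :=
        Real.rpow_le_rpow (by linarith) hcube (by norm_num)
    _ = Ψ ^ 2 := by
        rw [← Real.rpow_natCast |Ψ| 3, ← Real.rpow_mul (abs_nonneg Ψ)]
        have he : ((3:ℕ):ℝ) * ((2:ℝ)/3) = ((2:ℕ):ℝ) := by norm_num
        rw [he, Real.rpow_natCast, sq_abs]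

lemma integrable_F (X : ℝ) : Integrable (F X) := by
  set T := max 1 (max (Real.sqrt (2*|X|)) (Real.sqrt (8/pStar))) with hT
  have hT1 : (1:ℝ) ≤ T := le_max_left _ _
  have hT0 : (0:ℝ) < T := lt_of_lt_of_le one_pos hT1
  set c : ℝ := (pStar/4) ^ ((2:ℝ)/3) with hc'
  have hc : 0 < c := Real.rpow_pos_of_pos (div_pos pStar_pos (by norm_num)) _
  -- the pointwise bound on (T, ∞)
  have key : ∀ t : ℝ, t ∈ Ioi T → F X t ≤ (1/(3*c)) * t ^ (-((4:ℝ)/3)) := by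
    intro t ht
    simp only [mem_Ioi] at ht
    have htpos : 0 < t := lt_trans hT0 ht
    have ht2X : 2*|X| ≤ t^2 := by
      have h1 : Real.sqrt (2*|X|) ≤ t := le_of_lt (lt_of_le_of_lt (le_max_left _ _ |>.trans (le_max_right _ _)) ht)
      nlinarith [Real.sq_sqrt (by positivity : (0:ℝ) ≤ 2*|X|), Real.sqrt_nonneg (2*|X|)]
    have ht8p : 8/pStar ≤ t^2 := by
      have h1 : Real.sqrt (8/pStar) ≤ t := le_of_lt (lt_of_le_of_lt ((le_max_right _ _).trans (le_max_right _ _)) ht)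
      nlinarith [Real.sq_sqrt (le_of_lt (div_pos (by norm_num) pStar_pos : (0:ℝ) < 8/pStar)), Real.sqrt_nonneg (8/pStar)]
    set Y := pStar * (X - t^2) with hY
    have hp := pStar_pos
    have hYneg : Y < 0 := by
      have : X - t^2 < 0 := by
        have : |X| ≤ t^2/2 := by linarith
        have : X ≤ t^2/2 := le_trans (le_abs_self X) this
        nlinarith
      exact mul_neg_of_pos_of_neg hp this
    have hYabs : pStar * t^2 / 2 ≤ |Y| := by
      rw [abs_of_neg hYneg]
      have : X ≤ t^2/2 := le_trans (le_abs_self X) (by linarith)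
      have h2 : t^2/2 ≤ t^2 - X := by linarith
      calc pStar * t^2/2 = pStar * (t^2/2) := by ring
        _ ≤ pStar * (t^2 - X) := by nlinarith
        _ = -Y := by rw [hY]; ring
    have hY2 : 2 ≤ |Y| := by
      have : 4 ≤ pStar * t^2 / 2 := by
        have : 8 ≤ pStar * t^2 := by
          have := mul_le_mul_of_nonneg_left ht8p (le_of_lt hp)
          calc (8:ℝ) = pStar * (8/pStar) := by field_simp
            _ ≤ pStar * t^2 := this
        linarith
      linarith
    have hΨ : c * t ^ ((4:ℝ)/3) ≤ Psi1 Y ^ 2 := by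
      have h1 : (pStar/4) * t^2 ≤ |Y|/2 := by linarith
      have hnn : (0:ℝ) ≤ (pStar/4) * t^2 :=
        mul_nonneg (div_nonneg hp.le (by norm_num)) (sq_nonneg t)
      have h2 : ((pStar/4) * t^2) ^ ((2:ℝ)/3) ≤ (|Y|/2) ^ ((2:ℝ)/3) :=
        Real.rpow_le_rpow hnn h1 (by norm_num)
      have h3 : ((pStar/4) * t^2) ^ ((2:ℝ)/3) = c * t ^ ((4:ℝ)/3) := by
        rw [Real.mul_rpow (div_nonneg hp.le (by norm_num)) (sq_nonneg t), hc']
        congr 1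
        rw [← Real.rpow_natCast t 2, ← Real.rpow_mul htpos.le]
        norm_num
      calc c * t ^ ((4:ℝ)/3) = ((pStar/4) * t^2) ^ ((2:ℝ)/3) := h3.symm
        _ ≤ (|Y|/2) ^ ((2:ℝ)/3) := h2
        _ ≤ Psi1 Y ^ 2 := Psi1_sq_ge hY2
    have htr : 0 < t ^ ((4:ℝ)/3) := Real.rpow_pos_of_pos htpos _
    have hden : 3 * (c * t ^ ((4:ℝ)/3)) ≤ 1 + 3 * (Psi1 Y)^2 := by nlinarith
    have : F X t ≤ 1 / (3 * (c * t ^ ((4:ℝ)/3))) := by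
      unfold F
      rw [← hY]
      exact one_div_le_one_div_of_le (by nlinarith [mul_pos hc htr]) hden
    calc F X t ≤ 1 / (3 * (c * t ^ ((4:ℝ)/3))) := this
      _ = (1/(3*c)) * t ^ (-((4:ℝ)/3)) := by
          rw [Real.rpow_neg htpos.le]
          field_simp
  -- integrability on (T, ∞)
  have hIoi : IntegrableOn (F X) (Ioi T) := by
    have hmaj : IntegrableOn (fun t : ℝ => (1/(3*c)) * t ^ (-((4:ℝ)/3))) (Ioi T) :=
      (integrableOn_Ioi_rpow_of_lt (by norm_num) hT0).const_mul _
    refine Integrable.mono' hmaj ((measurable_F X).aestronglyMeasurable.restrict) ?_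
    filter_upwards [ae_restrict_mem measurableSet_Ioi] with t ht
    rw [Real.norm_eq_abs, abs_of_pos (F_pos X t)]
    exact key t ht
  -- integrability on (-∞, -T) by symmetry
  have hIio : IntegrableOn (F X) (Iio (-T)) := by
    rw [← Measure.map_neg_eq_self (volume : Measure ℝ)]
    have m : MeasurableEmbedding fun x : ℝ => -x :=
      (Homeomorph.neg ℝ).measurableEmbedding
    rw [m.integrableOn_map_iff]
    have hcomp : (F X ∘ fun x : ℝ => -x) = F X := by
      funext t; simp [Function.comp, F_even]
    rw [hcomp]
    have hpre : (fun x : ℝ => -x) ⁻¹' (Iio (-T)) = Ioi T := by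
      ext x; simp
    rw [hpre]
    exact hIoi
  -- integrability on [-T, T]
  have hIcc : IntegrableOn (F X) (Icc (-T) T) := by
    apply Measure.integrableOn_of_bounded (M := 1)
    · exact (measure_Icc_lt_top).ne
    · exact (measurable_F X).aestronglyMeasurable
    · filter_upwards with t
      rw [Real.norm_eq_abs, abs_of_pos (F_pos X t)]
      exact F_le_one X t
  have huniv : Iio (-T) ∪ (Icc (-T) T ∪ Ioi T) = Set.univ := by
    ext t
    simp only [mem_union, mem_Iio, mem_Icc, mem_Ioi, mem_univ, iff_true]
    rcases lt_or_ge t (-T) with h | h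
    · exact Or.inl h
    · rcases le_or_gt t T with h2 | h2
      · exact Or.inr (Or.inl ⟨h, h2⟩)
      · exact Or.inr (Or.inr h2)
  have := (hIio.union (hIcc.union hIoi))
  rw [huniv] at this
  exact integrableOn_univ.mp this

end PhiSym

open PhiSym Set

/-- The symmetries `Φ₁(a,-b) = Φ₁(a,b)`, `Φ₂(a,b) + Φ₂(a,-b) = 2𝒴*(Φ₁(a,b))`, and
`0 < Φ₂(a,b) < 2𝒴*(Φ₁(a,b))`. -/
theorem Phi_symmetry :
    ∀ a b : ℝ,
      (Phi (a, -b)).1 = (Phi (a, b)).1 ∧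
      (Phi (a, b)).2 + (Phi (a, -b)).2 = 2 * Ystar ((Phi (a, b)).1) ∧
      0 < (Phi (a, b)).2 ∧ (Phi (a, b)).2 < 2 * Ystar ((Phi (a, b)).1) := by
  intro a b
  set X := a + b ^ 2 + pStar ^ 2 * a ^ 3 with hX
  have hPhi1 : (Phi (a, b)).1 = X := rfl
  have hPhi1' : (Phi (a, -b)).1 = X := by simp only [Phi, hX]; ring_nf
  -- second components as integrals of F X
  have hPhi2 : ∀ b' : ℝ, b' ^ 2 = b ^ 2 →
      (Phi (a, b')).2 = ∫ t in Iio b', F X t := by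
    intro b' hb'
    simp only [Phi, F, hX]
    apply setIntegral_congr_fun measurableSet_Iio
    intro t _
    rw [hb']
    ring_nf
  have h2b : (Phi (a, b)).2 = ∫ t in Iio b, F X t := hPhi2 b rfl
  have h2nb : (Phi (a, -b)).2 = ∫ t in Iio (-b), F X t := hPhi2 (-b) (by ring)
  have hInt := integrable_F X
  have hYstar : Ystar X = ∫ t in Ioi (0:ℝ), F X t := rfl
  -- sum identity
  have hsum : (∫ t in Iio b, F X t) + ∫ t in Iio (-b), F X t = 2 * Ystar X := by
    have h1 : (∫ t in Iio (-b), F X t) = ∫ t in Ioi b, F X t := by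
      rw [← integral_Iic_eq_integral_Iio]
      have : (∫ t in Iic (-b), F X t) = ∫ t in Iic (-b), F X (-t) := by
        apply setIntegral_congr_fun measurableSet_Iic
        intro t _
        exact (F_even X t).symm
      rw [this, integral_comp_neg_Iic, neg_neg]
    have h2 : (∫ t in Iio b, F X t) + ∫ t in Ici b, F X t = ∫ t, F X t :=
      intervalIntegral.integral_Iio_add_Ici hInt.integrableOn hInt.integrableOn
    have h3 : (∫ t in Ici b, F X t) = ∫ t in Ioi b, F X t :=
      integral_Ici_eq_integral_Ioi
    have h4 : (∫ t, F X t) = 2 * ∫ t in Ioi (0:ℝ), F X t := by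
      have habs : (∫ t, F X t) = ∫ t, F X |t| := by
        apply integral_congr_ae
        filter_upwards with t
        unfold F
        rw [sq_abs]
      rw [habs, integral_comp_abs]
    rw [h1, ← h3, h2, h4, hYstar]
  -- positivity of the half-line integrals
  have hpos : ∀ b' : ℝ, 0 < ∫ t in Iio b', F X t := by
    intro b'
    rw [setIntegral_pos_iff_support_of_nonneg_ae]
    · have hsupp : Function.support (F X) = Set.univ := by
        ext t; simp [Function.support, (F_pos X t).ne']
      rw [hsupp, Set.univ_inter, Real.volume_Iio]
      exact ENNReal.zero_lt_top
    · filter_upwards with t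
      exact (F_pos X t).le
    · exact hInt.integrableOn
  refine ⟨by rw [hPhi1, hPhi1'], ?_, ?_, ?_⟩
  · rw [hPhi1, h2b, h2nb, hsum]
  · rw [h2b]; exact hpos b
  · rw [hPhi1, h2b]
    have := hpos (-b)
    rw [← h2nb] at this
    rw [← hsum, ← h2nb]
    linarith [hpos b, this, h2b]
end
end

section
/- Let α, β ∈ ℝ, let Ω ⊆ ℝ² be open, and let Θ, Υ : Ω → ℝ be twice continuously differentiable functions satisfying, at every (X,Y) ∈ Ω, the self-similar stationary system (1−α)·Θ + (α·X + Θ)·∂_XΘ + (β·Y + Υ)·∂_YΘ = 0 and ∂_XΘ + ∂_YΥ = 0, with ∂_YΘ ≠ 0 on Ω. Suppose Ω'' ⊆ ℝ² is open and h : Ω'' → ℝ is continuously differentiable such that (X,q) ↦ (X, h(X,q)) is a two-sided inverse of (X,Y) ↦ (X, Θ(X,Y)) between Ω'' and Ω (i.e. Θ(X, h(X,q)) = q on Ω'' and h(X, Θ(X,Y)) = Y on Ω). Define τ(X,q) := ∂_YΘ(X, h(X,q)). Then on Ω'' one has (α−1)·q·∂_q τ + (α·X + q)·∂_X τ = (α−1−β)·τ.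 -/
noncomputable section

open Real

/-- Crocco-type transformation of the self-similar profile equation: if `(Θ, Υ)` is a
`C²` solution of the self-similar stationary system on an open set `Ω` with
`∂_Y Θ ≠ 0`, and `(X,q) ↦ (X, h(X,q))` is a `C¹` two-sided inverse of
`(X,Y) ↦ (X, Θ(X,Y))` between `Ω''` and `Ω`, then `τ(X,q) := ∂_Y Θ(X, h(X,q))`
satisfies `(α-1)q ∂_q τ + (αX + q) ∂_X τ = (α-1-β) τ` on `Ω''`. -/
theorem crocco_transform (α β : ℝ) (Ω : Set (ℝ × ℝ)) (hΩ : IsOpen Ω)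
    (Θ Υ : ℝ × ℝ → ℝ)
    (hΘ : ContDiffOn ℝ 2 Θ Ω) (hΥ : ContDiffOn ℝ 2 Υ Ω)
    (heq1 : ∀ p ∈ Ω,
      (1 - α) * Θ p + (α * p.1 + Θ p) * fderiv ℝ Θ p (1, 0)
        + (β * p.2 + Υ p) * fderiv ℝ Θ p (0, 1) = 0)
    (heq2 : ∀ p ∈ Ω, fderiv ℝ Θ p (1, 0) + fderiv ℝ Υ p (0, 1) = 0)
    (hne : ∀ p ∈ Ω, fderiv ℝ Θ p (0, 1) ≠ 0)
    (Ω'' : Set (ℝ × ℝ)) (hΩ'' : IsOpen Ω'')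
    (h : ℝ × ℝ → ℝ) (hh : ContDiffOn ℝ 1 h Ω'')
    (hmem : ∀ w ∈ Ω'', (w.1, h w) ∈ Ω)
    (hright : ∀ w ∈ Ω'', Θ (w.1, h w) = w.2)
    (hmem' : ∀ p ∈ Ω, (p.1, Θ p) ∈ Ω'')
    (hleft : ∀ p ∈ Ω, h (p.1, Θ p) = p.2)
    (τ : ℝ × ℝ → ℝ)
    (hτ : ∀ w, τ w = fderiv ℝ Θ (w.1, h w) (0, 1)) :
    ∀ w ∈ Ω'',
      (α - 1) * w.2 * fderiv ℝ τ w (0, 1) + (α * w.1 + w.2) * fderiv ℝ τ w (1, 0)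
        = (α - 1 - β) * τ w := by
  intro w hw
  have hp : (w.1, h w) ∈ Ω := hmem w hw
  set p : ℝ × ℝ := (w.1, h w) with hpdef
  have hΩp : Ω ∈ nhds p := hΩ.mem_nhds hp
  have hΩ''w : Ω'' ∈ nhds w := hΩ''.mem_nhds hw
  -- second derivative of Θ
  have hΘ1 : ContDiffOn ℝ 1 (fderiv ℝ Θ) Ω := hΘ.fderiv_of_isOpen hΩ (by norm_num)
  have hBd : DifferentiableAt ℝ (fderiv ℝ Θ) p :=
    (hΘ1.differentiableOn one_ne_zero).differentiableAt hΩp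
  set B := fderiv ℝ (fderiv ℝ Θ) p with hBdef
  have HB : HasFDerivAt (fderiv ℝ Θ) B p := hBd.hasFDerivAt
  have HA1 : HasFDerivAt (fun x => fderiv ℝ Θ x ((1:ℝ),(0:ℝ)))
      ((ContinuousLinearMap.apply ℝ ℝ (((1:ℝ),(0:ℝ)) : ℝ×ℝ)).comp B) p :=
    ((ContinuousLinearMap.apply ℝ ℝ (((1:ℝ),(0:ℝ)) : ℝ×ℝ)).hasFDerivAt).comp p HB
  have HA2 : HasFDerivAt (fun x => fderiv ℝ Θ x ((0:ℝ),(1:ℝ)))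
      ((ContinuousLinearMap.apply ℝ ℝ (((0:ℝ),(1:ℝ)) : ℝ×ℝ)).comp B) p :=
    ((ContinuousLinearMap.apply ℝ ℝ (((0:ℝ),(1:ℝ)) : ℝ×ℝ)).hasFDerivAt).comp p HB
  have hΘdiff : ∀ x ∈ Ω, DifferentiableAt ℝ Θ x := fun x hx =>
    (hΘ.differentiableOn (by norm_num)).differentiableAt (hΩ.mem_nhds hx)
  have hsymm : ∀ v u : ℝ×ℝ, B v u = B u v := by
    intro v u
    refine second_derivative_symmetric_of_eventually (f := Θ) ?_ HB v u
    filter_upwards [hΩp] with y hy using (hΘdiff y hy).hasFDerivAt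
  have HΘ : HasFDerivAt Θ (fderiv ℝ Θ p) p := (hΘdiff p hp).hasFDerivAt
  have HΥ : HasFDerivAt Υ (fderiv ℝ Υ p) p :=
    ((hΥ.differentiableOn (by norm_num)).differentiableAt hΩp).hasFDerivAt
  -- g and its derivative
  have hhd : DifferentiableAt ℝ h w :=
    (hh.differentiableOn one_ne_zero).differentiableAt hΩ''w
  have Hg : HasFDerivAt (fun w' : ℝ×ℝ => (w'.1, h w'))
      ((ContinuousLinearMap.fst ℝ ℝ ℝ).prod (fderiv ℝ h w)) w :=
    HasFDerivAt.prodMk hasFDerivAt_fst hhd.hasFDerivAt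
  -- derivative of τ
  have hτfun : τ = fun w' : ℝ×ℝ => fderiv ℝ Θ (w'.1, h w') (0,1) := funext hτ
  have Hτ : HasFDerivAt τ
      (((ContinuousLinearMap.apply ℝ ℝ (((0:ℝ),(1:ℝ)) : ℝ×ℝ)).comp B).comp
        ((ContinuousLinearMap.fst ℝ ℝ ℝ).prod (fderiv ℝ h w))) w := by
    rw [hτfun]; exact HA2.comp w Hg
  -- implicit function: Θ ∘ g = snd
  have HΦ : HasFDerivAt (fun w' : ℝ×ℝ => Θ (w'.1, h w'))
      ((fderiv ℝ Θ p).comp ((ContinuousLinearMap.fst ℝ ℝ ℝ).prod (fderiv ℝ h w))) w :=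
    HΘ.comp w Hg
  have hev : (fun w' : ℝ×ℝ => Θ (w'.1, h w')) =ᶠ[nhds w] (fun w' : ℝ×ℝ => w'.2) := by
    filter_upwards [hΩ''w] with x hx using hright x hx
  have keyΦ : (fderiv ℝ Θ p).comp ((ContinuousLinearMap.fst ℝ ℝ ℝ).prod (fderiv ℝ h w))
      = ContinuousLinearMap.snd ℝ ℝ ℝ := by
    rw [← HΦ.fderiv, hev.fderiv_eq]
    exact hasFDerivAt_snd.fderiv
  -- implicit function identities
  have e1 : fderiv ℝ Θ p ((0:ℝ),(1:ℝ)) * fderiv ℝ h w ((0:ℝ),(1:ℝ)) = 1 := by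
    have hc := congrArg (fun L : (ℝ×ℝ) →L[ℝ] ℝ => L ((0:ℝ),(1:ℝ))) keyΦ
    simp only [ContinuousLinearMap.comp_apply, ContinuousLinearMap.prod_apply,
      ContinuousLinearMap.coe_fst', ContinuousLinearMap.coe_snd'] at hc
    have h2 : ((0:ℝ), fderiv ℝ h w ((0:ℝ),(1:ℝ)))
        = fderiv ℝ h w ((0:ℝ),(1:ℝ)) • (((0:ℝ),(1:ℝ)) : ℝ×ℝ) := by simp [Prod.ext_iff]
    rw [h2, map_smul] at hc
    simpa [mul_comm] using hc
  have e2 : fderiv ℝ Θ p ((1:ℝ),(0:ℝ))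
      + fderiv ℝ Θ p ((0:ℝ),(1:ℝ)) * fderiv ℝ h w ((1:ℝ),(0:ℝ)) = 0 := by
    have hc := congrArg (fun L : (ℝ×ℝ) →L[ℝ] ℝ => L ((1:ℝ),(0:ℝ))) keyΦ
    simp only [ContinuousLinearMap.comp_apply, ContinuousLinearMap.prod_apply,
      ContinuousLinearMap.coe_fst', ContinuousLinearMap.coe_snd'] at hc
    have h2 : ((1:ℝ), fderiv ℝ h w ((1:ℝ),(0:ℝ)))
        = (((1:ℝ),(0:ℝ)) : ℝ×ℝ) + fderiv ℝ h w ((1:ℝ),(0:ℝ)) • (((0:ℝ),(1:ℝ)) : ℝ×ℝ) := by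
      simp [Prod.ext_iff]
    rw [h2, map_add, map_smul] at hc
    simp only [smul_eq_mul] at hc
    linarith [hc]
  -- directional derivatives of τ
  have tq : fderiv ℝ τ w ((0:ℝ),(1:ℝ))
      = fderiv ℝ h w ((0:ℝ),(1:ℝ)) * B ((0:ℝ),(1:ℝ)) ((0:ℝ),(1:ℝ)) := by
    rw [Hτ.fderiv]
    simp only [ContinuousLinearMap.comp_apply, ContinuousLinearMap.prod_apply,
      ContinuousLinearMap.coe_fst', ContinuousLinearMap.apply_apply]
    have h2 : ((0:ℝ), fderiv ℝ h w ((0:ℝ),(1:ℝ)))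
        = fderiv ℝ h w ((0:ℝ),(1:ℝ)) • (((0:ℝ),(1:ℝ)) : ℝ×ℝ) := by simp [Prod.ext_iff]
    rw [h2, map_smul]
    simp
  have tx : fderiv ℝ τ w ((1:ℝ),(0:ℝ))
      = B ((0:ℝ),(1:ℝ)) ((1:ℝ),(0:ℝ))
        + fderiv ℝ h w ((1:ℝ),(0:ℝ)) * B ((0:ℝ),(1:ℝ)) ((0:ℝ),(1:ℝ)) := by
    rw [Hτ.fderiv]
    simp only [ContinuousLinearMap.comp_apply, ContinuousLinearMap.prod_apply,
      ContinuousLinearMap.coe_fst', ContinuousLinearMap.apply_apply]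
    have h2 : ((1:ℝ), fderiv ℝ h w ((1:ℝ),(0:ℝ)))
        = (((1:ℝ),(0:ℝ)) : ℝ×ℝ) + fderiv ℝ h w ((1:ℝ),(0:ℝ)) • (((0:ℝ),(1:ℝ)) : ℝ×ℝ) := by
      simp [Prod.ext_iff]
    rw [h2, map_add, map_smul]
    simp only [smul_eq_mul, ContinuousLinearMap.add_apply, ContinuousLinearMap.smul_apply]
    rw [hsymm ((1:ℝ),(0:ℝ)) ((0:ℝ),(1:ℝ))]
  -- differentiate eq1 in direction (0,1)
  have HF := ((HΘ.const_mul (1-α)).add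
      ((((hasFDerivAt_fst.const_mul α).add HΘ).mul HA1))).add
      (((hasFDerivAt_snd.const_mul β).add HΥ).mul HA2)
  have hFzero : fderiv ℝ (fun x : ℝ×ℝ => (1-α) * Θ x + (α * x.1 + Θ x) * fderiv ℝ Θ x (1,0)
        + (β * x.2 + Υ x) * fderiv ℝ Θ x (0,1)) p = 0 := by
    have hev0 : (fun x : ℝ×ℝ => (1-α) * Θ x + (α * x.1 + Θ x) * fderiv ℝ Θ x (1,0)
        + (β * x.2 + Υ x) * fderiv ℝ Θ x (0,1)) =ᶠ[nhds p] (fun _ => (0:ℝ)) := by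
      filter_upwards [hΩp] with x hx using heq1 x hx
    rw [hev0.fderiv_eq]
    exact fderiv_const_apply 0
  have hDF := HF.fderiv.symm.trans hFzero
  have e4' := congrArg (fun L : (ℝ×ℝ) →L[ℝ] ℝ => L ((0:ℝ),(1:ℝ))) hDF
  simp only [ContinuousLinearMap.add_apply, ContinuousLinearMap.smul_apply,
    ContinuousLinearMap.comp_apply, ContinuousLinearMap.apply_apply,
    ContinuousLinearMap.coe_fst', ContinuousLinearMap.coe_snd',
    ContinuousLinearMap.zero_apply, smul_eq_mul] at e4'
  have e4 : (1-α) * fderiv ℝ Θ p ((0:ℝ),(1:ℝ))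
      + ((α * w.1 + Θ p) * B ((0:ℝ),(1:ℝ)) ((1:ℝ),(0:ℝ))
          + fderiv ℝ Θ p ((1:ℝ),(0:ℝ)) * fderiv ℝ Θ p ((0:ℝ),(1:ℝ)))
      + ((β * h w + Υ p) * B ((0:ℝ),(1:ℝ)) ((0:ℝ),(1:ℝ))
          + fderiv ℝ Θ p ((0:ℝ),(1:ℝ)) * (β + fderiv ℝ Υ p ((0:ℝ),(1:ℝ)))) = 0 := by
    have hp1 : p.1 = w.1 := rfl
    have hp2 : p.2 = h w := rfl
    simp only [Pi.add_apply, hp1, hp2] at e4'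
    linear_combination e4'
  -- original equations at p
  have e3 : (1-α) * Θ p + (α * w.1 + Θ p) * fderiv ℝ Θ p ((1:ℝ),(0:ℝ))
      + (β * h w + Υ p) * fderiv ℝ Θ p ((0:ℝ),(1:ℝ)) = 0 := heq1 p hp
  have e5 : fderiv ℝ Θ p ((1:ℝ),(0:ℝ)) + fderiv ℝ Υ p ((0:ℝ),(1:ℝ)) = 0 := heq2 p hp
  have e6 : Θ p = w.2 := hright w hw
  have hTne : fderiv ℝ Θ p ((0:ℝ),(1:ℝ)) ≠ 0 := hne p hp
  have hτw : τ w = fderiv ℝ Θ p ((0:ℝ),(1:ℝ)) := hτ w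
  rw [tq, tx, hτw]
  apply mul_left_cancel₀ hTne
  linear_combination
    ((α-1) * w.2 * B ((0:ℝ),(1:ℝ)) ((0:ℝ),(1:ℝ))) * e1
    + ((α * w.1 + w.2) * B ((0:ℝ),(1:ℝ)) ((0:ℝ),(1:ℝ))) * e2
    + (-(B ((0:ℝ),(1:ℝ)) ((0:ℝ),(1:ℝ)))) * e3
    + (fderiv ℝ Θ p ((0:ℝ),(1:ℝ))) * e4
    + (-(fderiv ℝ Θ p ((0:ℝ),(1:ℝ)) * fderiv ℝ Θ p ((0:ℝ),(1:ℝ)))) * e5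
    + (-((α-1) * B ((0:ℝ),(1:ℝ)) ((0:ℝ),(1:ℝ))
        + B ((0:ℝ),(1:ℝ)) ((1:ℝ),(0:ℝ)) * fderiv ℝ Θ p ((0:ℝ),(1:ℝ))
        - fderiv ℝ Θ p ((1:ℝ),(0:ℝ)) * B ((0:ℝ),(1:ℝ)) ((0:ℝ),(1:ℝ)))) * e6
end
end

section
/- For all (a,b) ∈ ℝ² one has the symmetries Φ′₁(−a,b) = −Φ′₁(a,b) and Φ′₂(−a,b) = Φ′₂(a,b), as well as Φ′₁(a,−b) = Φ′₁(a,b) and Φ′₂(a,b) + Φ′₂(a,−b) = 2·𝒴′*(Φ′₁(a,b)). -/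
noncomputable section

open Real MeasureTheory

/-- The degenerate map
`Φ′(a,b) = (a + a³ + b²a/4, 2∫_{-∞}^{b/2} db̃/((1+b̃²)(1 + 3Ψ₁((a+a³+b²a/4)/(1+b̃²)^{3/2})²)))`. -/
def Phi' (p : ℝ × ℝ) : ℝ × ℝ :=
  (p.1 + p.1 ^ 3 + p.2 ^ 2 * p.1 / 4,
    2 * ∫ t in Set.Iio (p.2 / 2),
      1 / ((1 + t ^ 2) *
        (1 + 3 * (Psi1 ((p.1 + p.1 ^ 3 + p.2 ^ 2 * p.1 / 4) /
          (1 + t ^ 2) ^ ((3 : ℝ) / 2))) ^ 2)))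

/-- The degenerate displacement curve
`𝒴′*(X) = ∫_{-∞}^∞ db/((1+b²)(1 + 3Ψ₁(X/(1+b²)^{3/2})²))`. -/
def Ystar' (X : ℝ) : ℝ :=
  ∫ b : ℝ, 1 / ((1 + b ^ 2) * (1 + 3 * (Psi1 (X / (1 + b ^ 2) ^ ((3 : ℝ) / 2))) ^ 2))

lemma cbrt_neg (x : ℝ) : cbrt (-x) = -cbrt x := by
  unfold cbrt; rw [Real.sign_neg, abs_neg]; ring

lemma Psi1_neg (X : ℝ) : Psi1 (-X) = -Psi1 X := by
  unfold Psi1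
  have hs : (-X) ^ 2 = X ^ 2 := by ring
  rw [hs]
  set s := Real.sqrt (1 / 27 + X ^ 2 / 4) with hsdef
  have h1 : -(-X) / 2 + s = -(-X / 2 - s) := by ring
  have h2 : -(-X) / 2 - s = -(-X / 2 + s) := by ring
  rw [h1, h2, cbrt_neg, cbrt_neg]; ring

lemma measurable_cbrt : Measurable cbrt := by
  have hsign : Measurable Real.sign := by
    have : Real.sign = fun r : ℝ => if r < 0 then (-1 : ℝ) else if 0 < r then 1 else 0 := by
      funext r; rfl
    rw [this]
    exact Measurable.ite (measurableSet_lt measurable_id measurable_const) measurable_const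
      (Measurable.ite (measurableSet_lt measurable_const measurable_id) measurable_const
        measurable_const)
  have hrp : Measurable fun x : ℝ => x ^ ((1:ℝ)/3) :=
    (Real.continuous_rpow_const (by norm_num)).measurable
  exact hsign.mul (hrp.comp measurable_abs)

lemma measurable_Psi1 : Measurable Psi1 := by
  unfold Psi1
  apply Measurable.add
  · exact measurable_cbrt.comp (((measurable_id.neg.div_const 2)).add
      (((measurable_const.add ((measurable_id.pow_const 2).div_const 4))).sqrt))
  · exact measurable_cbrt.comp (((measurable_id.neg.div_const 2)).sub
      (((measurable_const.add ((measurable_id.pow_const 2).div_const 4))).sqrt))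

/-- the integrand, as a function of X and t -/
def F (X t : ℝ) : ℝ :=
  1 / ((1 + t ^ 2) * (1 + 3 * (Psi1 (X / (1 + t ^ 2) ^ ((3 : ℝ) / 2))) ^ 2))

lemma F_neg_left (X t : ℝ) : F (-X) t = F X t := by
  unfold F
  rw [show -X / (1 + t ^ 2) ^ ((3:ℝ)/2) = -(X / (1 + t ^ 2) ^ ((3:ℝ)/2)) by ring, Psi1_neg]
  ring_nf

lemma F_neg_right (X t : ℝ) : F X (-t) = F X t := by
  unfold F; rw [neg_pow, show ((-1:ℝ))^2 = 1 by norm_num, one_mul]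

lemma F_integrable (X : ℝ) : Integrable (F X) := by
  have hm : Measurable (F X) := by
    unfold F
    simp only [one_div]
    apply Measurable.inv
    apply Measurable.mul (measurable_const.add (measurable_id.pow_const 2))
    apply Measurable.add measurable_const
    apply Measurable.const_mul
    apply Measurable.pow_const
    apply measurable_Psi1.comp
    have hrp : Measurable fun x : ℝ => x ^ ((3:ℝ)/2) :=
      (Real.continuous_rpow_const (by norm_num)).measurable
    exact (hrp.comp (measurable_const.add (measurable_id.pow_const 2))).const_div X
  have hbound : ∀ t : ℝ, ‖F X t‖ ≤ ‖(1 + t ^ 2)⁻¹‖ := by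
    intro t
    have ht : (0:ℝ) < 1 + t ^ 2 := by positivity
    have h1 : (1:ℝ) ≤ 1 + 3 * (Psi1 (X / (1 + t ^ 2) ^ ((3:ℝ)/2))) ^ 2 :=
      le_add_of_nonneg_right (by positivity)
    unfold F
    rw [Real.norm_eq_abs, Real.norm_eq_abs, abs_of_nonneg (by positivity),
      abs_of_nonneg (by positivity), one_div, inv_le_inv₀ (by positivity) ht]
    calc (1 + t^2) = (1 + t^2) * 1 := by ring
    _ ≤ (1 + t ^ 2) * (1 + 3 * (Psi1 (X / (1 + t ^ 2) ^ ((3:ℝ)/2))) ^ 2) :=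
        mul_le_mul_of_nonneg_left h1 ht.le
  exact (integrable_inv_one_add_sq).mono hm.aestronglyMeasurable
    (Filter.Eventually.of_forall hbound)


/-- The symmetries of `Φ′`: `Φ′₁` is odd in `a`, `Φ′₂` even in `a`, `Φ′₁` even in `b`,
and `Φ′₂(a,b) + Φ′₂(a,-b) = 2𝒴′*(Φ′₁(a,b))`. -/
theorem Phi'_symmetry :
    ∀ a b : ℝ,
      (Phi' (-a, b)).1 = -(Phi' (a, b)).1 ∧
      (Phi' (-a, b)).2 = (Phi' (a, b)).2 ∧
      (Phi' (a, -b)).1 = (Phi' (a, b)).1 ∧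
      (Phi' (a, b)).2 + (Phi' (a, -b)).2 = 2 * Ystar' ((Phi' (a, b)).1) := by
  intro a b
  set X := a + a ^ 3 + b ^ 2 * a / 4 with hX
  have hX1 : (Phi' (a, b)).1 = X := rfl
  have hXneg : (Phi' (-a, b)).1 = -X := by simp only [Phi']; ring
  have hXb : (Phi' (a, -b)).1 = X := by simp only [Phi']; ring
  refine ⟨hXneg.trans (by rw [hX1]), ?_, hXb.trans (by rw [hX1]), ?_⟩
  · -- second component even in a
    show (2 : ℝ) * ∫ t in Set.Iio (b/2), F (-a + (-a)^3 + b^2 * (-a)/4) t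
        = 2 * ∫ t in Set.Iio (b/2), F X t
    have : -a + (-a)^3 + b^2 * (-a)/4 = -X := by rw [hX]; ring
    rw [this]
    congr 1
    exact setIntegral_congr_fun measurableSet_Iio fun t _ => F_neg_left X t
  · -- sum equals 2 * Ystar'
    have h2 : (Phi' (a, -b)).2 = 2 * ∫ t in Set.Iio (-b/2), F X t := by
      show (2:ℝ) * ∫ t in Set.Iio (-b/2), F (a + a^3 + (-b)^2 * a/4) t = _
      congr 2
      rw [hX]; ring
    have h1 : (Phi' (a, b)).2 = 2 * ∫ t in Set.Iio (b/2), F X t := rfl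
    rw [h1, h2, hX1]
    have hflip : ∫ t in Set.Iio (-b/2), F X t = ∫ t in Set.Ioi (b/2), F X t := by
      rw [show (-b/2 : ℝ) = -(b/2) by ring, ← integral_Iic_eq_integral_Iio,
        ← integral_comp_neg_Ioi]
      simp only [F_neg_right]
    rw [hflip, ← mul_add]
    have hint := F_integrable X
    have : (∫ t in Set.Iio (b/2), F X t) + ∫ t in Set.Ioi (b/2), F X t = ∫ t, F X t := by
      rw [← integral_Iic_eq_integral_Iio]
      exact intervalIntegral.integral_Iic_add_Ioi hint.integrableOn hint.integrableOn
    rw [this]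
    rfl
end
end
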